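/- Fix a real number a with 0 < a < 1. For all real b, c, d ≥ 0 satisfying b + c + d = 1 - a and such that at least one of b, c, d equals 0, one has h_a(b,c,d) ≤ arccos(2a-1) + 2·arccos(a). Moreover, this bound is attained: h_a(0, (1-a)/2, (1-a)/2) = arccos(2a-1) + 2·arccos(a). -/
import Mathlib


open Real

/-- `h_a(b,c,d) = arccos(2(a+b)-1) + arccos(2(a+c)-1) + arccos(2(a+d)-1)`. -/
noncomputable def hFun (a b c d : ℝ) : ℝ :=
  Real.arccos (2 * (a + b) - 1) + Real.arccos (2 * (a + c) - 1) +
    Real.arccos (2 * (a + d) - 1)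

lemma key_ineq (a x y : ℝ) (ha0 : 0 < a) (hx1 : -1 ≤ x) (hx2 : x ≤ 1)
    (hy1 : -1 ≤ y) (hy2 : y ≤ 1) (hxy : x + y = 2 * a) :
    Real.arccos x + Real.arccos y ≤ 2 * Real.arccos a := by
  have ha1 : a ≤ 1 := by linarith
  have hApi : Real.arccos x + Real.arccos y ≤ π := by
    have h1 : Real.arccos y ≤ Real.arccos (-x) :=
      Real.strictAntiOn_arccos.antitoneOn ⟨by linarith, by linarith⟩ ⟨hy1, hy2⟩ (by linarith)
    rw [Real.arccos_neg] at h1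
    linarith
  have hA0 : 0 ≤ Real.arccos x + Real.arccos y :=
    add_nonneg (Real.arccos_nonneg x) (Real.arccos_nonneg y)
  have hC0 : 0 ≤ 2 * Real.arccos a := by nlinarith [Real.arccos_nonneg a]
  have hCpi : 2 * Real.arccos a ≤ π := by
    have := (Real.arccos_le_pi_div_two (x := a)).mpr (le_of_lt ha0)
    linarith
  -- key cosine inequality
  have hQ : 0 ≤ x * y - (2 * a ^ 2 - 1) := by
    nlinarith [mul_nonneg (by linarith : (0:ℝ) ≤ 1 - x) (by linarith : (0:ℝ) ≤ x - (2*a - 1))]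
  have hsq : Real.sqrt (1 - x ^ 2) * Real.sqrt (1 - y ^ 2) ≤ x * y - (2 * a ^ 2 - 1) := by
    rw [← Real.sqrt_mul (by nlinarith)]
    have : (1 - x ^ 2) * (1 - y ^ 2) ≤ (x * y - (2 * a ^ 2 - 1)) ^ 2 := by
      have hid : (x * y - (2 * a ^ 2 - 1)) ^ 2 - (1 - x ^ 2) * (1 - y ^ 2)
          = (2 * a * (x - a)) ^ 2 := by
        have hyx : y = 2 * a - x := by linarith
        rw [hyx]; ring
      nlinarith [sq_nonneg (2 * a * (x - a)), hid]
    calc Real.sqrt ((1 - x ^ 2) * (1 - y ^ 2)) ≤ Real.sqrt ((x * y - (2 * a ^ 2 - 1)) ^ 2) :=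
          Real.sqrt_le_sqrt this
      _ = x * y - (2 * a ^ 2 - 1) := Real.sqrt_sq hQ
  have hcos : Real.cos (2 * Real.arccos a) ≤ Real.cos (Real.arccos x + Real.arccos y) := by
    rw [Real.cos_add, Real.sin_arccos, Real.sin_arccos, Real.cos_arccos hx1 hx2,
      Real.cos_arccos hy1 hy2, Real.cos_two_mul, Real.cos_arccos (by linarith) ha1]
    nlinarith [hsq]
  by_contra h
  push_neg at h
  have := Real.strictAntiOn_cos ⟨hC0, hCpi⟩ ⟨hA0, hApi⟩ h
  linarith

lemma two_term (a c d : ℝ) (ha0 : 0 < a) (hc : 0 ≤ c) (hd : 0 ≤ d)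
    (hsum : c + d = 1 - a) :
    Real.arccos (2 * (a + c) - 1) + Real.arccos (2 * (a + d) - 1) ≤ 2 * Real.arccos a := by
  apply key_ineq a _ _ ha0 (by linarith) (by nlinarith) (by linarith) (by nlinarith)
  ring_nf
  linarith

/-- For `0 < a < 1`, on the boundary of the simplex
`{(b,c,d) : b,c,d ≥ 0, b+c+d = 1-a}` (i.e. where some coordinate vanishes) we have
`h_a(b,c,d) ≤ arccos(2a-1) + 2·arccos a`, and the bound is attained at
`(0, (1-a)/2, (1-a)/2)`. -/
theorem stmt3 (a : ℝ) (ha0 : 0 < a) (ha1 : a < 1) :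
    (∀ b c d : ℝ, 0 ≤ b → 0 ≤ c → 0 ≤ d → b + c + d = 1 - a →
      (b = 0 ∨ c = 0 ∨ d = 0) →
      hFun a b c d ≤ Real.arccos (2 * a - 1) + 2 * Real.arccos a) ∧
    hFun a 0 ((1 - a) / 2) ((1 - a) / 2)
      = Real.arccos (2 * a - 1) + 2 * Real.arccos a := by
  constructor
  · intro b c d hb hc hd hsum hzero
    unfold hFun
    rcases hzero with h | h | h
    · subst h
      have := two_term a c d ha0 hc hd (by linarith)
      rw [add_zero]
      linarith
    · subst h
      have := two_term a b d ha0 hb hd (by linarith)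
      rw [add_zero]
      linarith
    · subst h
      have := two_term a b c ha0 hb hc (by linarith)
      rw [add_zero]
      linarith
  · unfold hFun
    have h1 : 2 * (a + (1 - a) / 2) - 1 = a := by ring
    rw [add_zero, h1]
    ring
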